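/- Let n ≥ 1 and α ∈ (0,1), and set k := ⌈(1−α)(n+1)⌉. Let μ be a probability measure on the space of functions v : Fin (n+1) → ℝ that is exchangeable, i.e., for every permutation σ of Fin (n+1), the pushforward of μ under v ↦ v ∘ σ equals μ. For v : Fin (n+1) → ℝ, let q(v) denote the k-th smallest value among v(0),…,v(n−1) (the first n coordinates), with the convention q(v) = +∞ if k > n. Then μ{ v : v(n) ≤ q(v) } ≥ 1 − α, where v(n) denotes the last coordinate. -/
import Mathlib


open MeasureTheory
open Finset


lemma count_perm {N : ℕ} (v : Fin N → ℝ) (σ : Equiv.Perm (Fin N)) (c : ℝ) :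
    (univ.filter fun j => v (σ j) < c).card = (univ.filter fun j => v j < c).card := by
  apply Finset.card_bij (fun j _ => σ j)
  · intro a ha; simp only [mem_filter, mem_univ, true_and] at ha ⊢; exact ha
  · intro a _ b _ h; exact σ.injective h
  · intro b hb
    exact ⟨σ.symm b, by simpa using hb, by simp⟩

lemma mono_le_iff {N k : ℕ} (u : Fin N → ℝ) (hu : Monotone u) (hk1 : 1 ≤ k) (hk : k ≤ N)
    (c : ℝ) : c ≤ u ⟨k - 1, by omega⟩ ↔ (univ.filter fun i => u i < c).card < k := by
  constructor
  · intro h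
    have hsub : (univ.filter fun i => u i < c) ⊆ Finset.Iio (⟨k - 1, by omega⟩ : Fin N) := by
      intro i hi
      simp only [mem_filter, mem_univ, true_and] at hi
      simp only [Finset.mem_Iio]
      by_contra hlt
      push_neg at hlt
      exact absurd (lt_of_lt_of_le hi h) (not_lt.2 (hu hlt))
    have h1 := Finset.card_le_card hsub
    rw [Fin.card_Iio] at h1
    have h2 : (univ.filter fun i => u i < c).card ≤ k - 1 := h1
    omega
  · intro h
    by_contra hc
    push_neg at hc
    have hsub : (Finset.Iic (⟨k - 1, by omega⟩ : Fin N)) ⊆ univ.filter fun i => u i < c := by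
      intro i hi
      simp only [Finset.mem_Iic] at hi
      simp only [mem_filter, mem_univ, true_and]
      exact lt_of_le_of_lt (hu hi) hc
    have h1 := Finset.card_le_card hsub
    rw [Fin.card_Iic] at h1
    have h2 : k - 1 + 1 ≤ (univ.filter fun i => u i < c).card := h1
    omega

lemma count_low_rank {N k : ℕ} (v : Fin N → ℝ) (hk : k ≤ N) :
    k ≤ (univ.filter fun i => (univ.filter fun j => v j < v i).card < k).card := by
  rcases Nat.eq_zero_or_pos k with rfl | hk1
  · simp
  set σ := Tuple.sort v with hσ
  have hu : Monotone (v ∘ σ) := Tuple.monotone_sort v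
  have hsrc : (univ.filter fun p : Fin N => p.val < k).card = (Finset.range k).card := by
    apply Finset.card_bij (fun p _ => p.val)
    · intro a ha; simp only [mem_filter, mem_univ, true_and] at ha; simpa using ha
    · intro a _ b _ h; exact Fin.val_injective h
    · intro b hb
      simp only [Finset.mem_range] at hb
      exact ⟨⟨b, by omega⟩, by simp [hb], rfl⟩
  rw [Finset.card_range] at hsrc
  have key : (univ.filter fun p : Fin N => p.val < k).card ≤
      (univ.filter fun i => (univ.filter fun j => v j < v i).card < k).card := by
    apply Finset.card_le_card_of_injOn (fun p => σ p)
    · intro p hp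
      simp only [mem_filter, mem_univ, true_and, coe_filter, Set.mem_setOf_eq] at hp ⊢
      calc (univ.filter fun j => v j < v (σ p)).card
          = (univ.filter fun q => v (σ q) < v (σ p)).card := (count_perm v σ (v (σ p))).symm
        _ ≤ (Finset.Iio p).card := by
            apply Finset.card_le_card
            intro q hq
            simp only [mem_filter, mem_univ, true_and] at hq
            simp only [Finset.mem_Iio]
            by_contra hle
            push_neg at hle
            exact absurd hq (not_lt.2 (hu hle))
        _ = p.val := Fin.card_Iio p
        _ < k := hp
    · intro a _ b _ h; exact σ.injective h
  omega


lemma count_meas {n k : ℕ} (i : Fin (n+1)) :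
    MeasurableSet {v : Fin (n+1) → ℝ | (univ.filter fun j => v j < v i).card < k} := by
  have hm : Measurable fun v : Fin (n+1) → ℝ => (univ.filter fun j => v j < v i).card := by
    simp_rw [Finset.card_filter]
    exact Finset.measurable_sum _ fun j _ =>
      Measurable.ite (measurableSet_lt (measurable_pi_apply j) (measurable_pi_apply i))
        measurable_const measurable_const
  exact hm (measurableSet_Iio (a := k))

lemma key_bound {n : ℕ} (μ : Measure (Fin (n + 1) → ℝ)) [IsProbabilityMeasure μ] (k : ℕ)
    (hexch : ∀ σ : Equiv.Perm (Fin (n + 1)), Measure.map (fun v => v ∘ σ) μ = μ)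
    (hk : k ≤ n + 1) :
    (k : ENNReal) ≤ (n + 1) *
      μ {v : Fin (n+1) → ℝ | (univ.filter fun j => v j < v (Fin.last n)).card < k} := by
  set B : Fin (n+1) → Set (Fin (n+1) → ℝ) :=
    fun i => {v | (univ.filter fun j => v j < v i).card < k} with hB
  have hmeas : ∀ i, MeasurableSet (B i) := fun i => count_meas i
  have hBeq : ∀ i, μ (B i) = μ (B (Fin.last n)) := by
    intro i
    have hmap : Measurable fun v : Fin (n+1) → ℝ => v ∘ (Equiv.swap i (Fin.last n)) :=
      measurable_pi_lambda _ fun j => measurable_pi_apply _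
    have hpre : (fun v : Fin (n+1) → ℝ => v ∘ (Equiv.swap i (Fin.last n))) ⁻¹' (B (Fin.last n))
        = B i := by
      ext v
      simp only [hB, Set.mem_preimage, Set.mem_setOf_eq, Function.comp]
      simp only [Equiv.swap_apply_right]
      rw [count_perm]
    calc μ (B i) = μ ((fun v : Fin (n+1) → ℝ => v ∘ (Equiv.swap i (Fin.last n))) ⁻¹'
          (B (Fin.last n))) := by rw [hpre]
      _ = (Measure.map (fun v : Fin (n+1) → ℝ => v ∘ (Equiv.swap i (Fin.last n))) μ)
          (B (Fin.last n)) := (Measure.map_apply hmap (hmeas _)).symm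
      _ = μ (B (Fin.last n)) := by rw [hexch]
  have hsum : ∑ i : Fin (n+1), μ (B i) = (n+1 : ENNReal) * μ (B (Fin.last n)) := by
    simp_rw [hBeq]
    simp [Finset.sum_const, mul_comm]
  have hlin : ∑ i : Fin (n+1), μ (B i)
      = ∫⁻ v, ∑ i : Fin (n+1), (B i).indicator (fun _ => (1:ENNReal)) v ∂μ := by
    rw [lintegral_finset_sum]
    · apply Finset.sum_congr rfl
      intro i _
      rw [lintegral_indicator (hmeas i)]
      simp
    · exact fun i _ => (measurable_const.indicator (hmeas i))
  have hpt : ∀ v, (k : ENNReal) ≤ ∑ i : Fin (n+1), (B i).indicator (fun _ => (1:ENNReal)) v := by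
    intro v
    have : ∑ i : Fin (n+1), (B i).indicator (fun _ => (1:ENNReal)) v
        = ((univ.filter fun i : Fin (n+1) => v ∈ B i).card : ENNReal) := by
      rw [Finset.card_filter]
      push_cast
      apply Finset.sum_congr rfl
      intro i _
      simp [Set.indicator_apply]
    rw [this]
    have := count_low_rank v hk
    exact_mod_cast this
  calc (k : ENNReal) = ∫⁻ _, (k : ENNReal) ∂μ := by simp
    _ ≤ ∫⁻ v, ∑ i : Fin (n+1), (B i).indicator (fun _ => (1:ENNReal)) v ∂μ :=
        lintegral_mono hpt
    _ = (n+1 : ENNReal) * μ (B (Fin.last n)) := by rw [← hlin, hsum]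

open Finset in
lemma sorted_le_iff {n k : ℕ} (hk1 : 1 ≤ k) (hkn : k ≤ n) (w : Fin n → ℝ) (c : ℝ) :
    c ≤ w (Tuple.sort w ⟨k - 1, by omega⟩) ↔ (univ.filter fun i => w i < c).card < k := by
  have h := mono_le_iff (w ∘ Tuple.sort w) (Tuple.monotone_sort w) hk1 hkn c
  simp only [Function.comp_apply] at h
  rw [h, count_perm]



/-- The `k`-th smallest value (1-indexed) among `v 0, …, v (n-1)`, as an element of
`EReal`, with the convention that it is `+∞` when `k > n`. -/
noncomputable def kthSmallestE {n : ℕ} (hn : 1 ≤ n) (v : Fin n → ℝ) (k : ℕ) : EReal :=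
  if h : k ≤ n then ((v (Tuple.sort v ⟨k - 1, by omega⟩) : ℝ) : EReal) else ⊤

/-- Core quantile lemma behind split-conformal coverage: if `μ` is an exchangeable
probability measure on `Fin (n+1) → ℝ` and `q(v)` is the `⌈(1-α)(n+1)⌉`-th smallest
value among the first `n` coordinates of `v` (`+∞` if `⌈(1-α)(n+1)⌉ > n`), then the
last coordinate satisfies `v(n) ≤ q(v)` with probability at least `1 - α`. -/
theorem exchangeable_rank_quantile {n : ℕ} (hn : 1 ≤ n) (α : ℝ) (hα : α ∈ Set.Ioo (0 : ℝ) 1)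
    (μ : Measure (Fin (n + 1) → ℝ)) [IsProbabilityMeasure μ]
    (hexch : ∀ σ : Equiv.Perm (Fin (n + 1)), Measure.map (fun v => v ∘ σ) μ = μ) :
    ENNReal.ofReal (1 - α) ≤
      μ {v : Fin (n + 1) → ℝ |
          ((v (Fin.last n) : ℝ) : EReal) ≤
            kthSmallestE hn (fun i : Fin n => v i.castSucc) ⌈(1 - α) * (n + 1)⌉₊} := by
  obtain ⟨hα0, hα1⟩ := hα
  set k := ⌈(1 - α) * (n + 1)⌉₊ with hkdef
  have hnp : (0:ℝ) < (n:ℝ) + 1 := by positivity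
  have hk1 : 1 ≤ k := Nat.one_le_iff_ne_zero.mpr (by
    simp only [hkdef, ne_eq, Nat.ceil_eq_zero, not_le]
    nlinarith)
  have hkn1 : k ≤ n + 1 := by
    rw [hkdef]
    have h : (1 - α) * (n + 1) ≤ ((n + 1 : ℕ) : ℝ) := by push_cast; nlinarith
    calc ⌈(1 - α) * (n + 1 : ℝ)⌉₊ ≤ ⌈((n + 1 : ℕ) : ℝ)⌉₊ := Nat.ceil_le_ceil h
      _ = n + 1 := Nat.ceil_natCast (n+1)
  have hge : (1 - α) * (n + 1) ≤ (k : ℝ) := Nat.le_ceil _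
  by_cases hkn : k ≤ n
  · have hset : {v : Fin (n + 1) → ℝ |
          ((v (Fin.last n) : ℝ) : EReal) ≤
            kthSmallestE hn (fun i : Fin n => v i.castSucc) k}
        = {v : Fin (n+1) → ℝ | (univ.filter fun j => v j < v (Fin.last n)).card < k} := by
      ext v
      simp only [Set.mem_setOf_eq, kthSmallestE, dif_pos hkn, EReal.coe_le_coe_iff]
      have h3 : (univ.filter fun j : Fin (n+1) => v j < v (Fin.last n)).card
          = (univ.filter fun i : Fin n => v i.castSucc < v (Fin.last n)).card := by
        rw [Finset.card_filter, Finset.card_filter, Fin.sum_univ_castSucc]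
        simp
      rw [h3]
      exact sorted_le_iff hk1 hkn (fun i : Fin n => v i.castSucc) (v (Fin.last n))
    rw [hset]
    have hkey := key_bound μ k hexch (by omega)
    have hne : ((n:ENNReal) + 1) ≠ 0 := by exact_mod_cast Nat.succ_ne_zero n
    have hnt : ((n:ENNReal) + 1) ≠ ⊤ := by simp
    rw [← ENNReal.mul_le_mul_iff_left hne hnt]
    calc ENNReal.ofReal (1 - α) * ((n:ENNReal) + 1)
        = ENNReal.ofReal (1 - α) * ENNReal.ofReal ((n:ℝ) + 1) := by
          rw [ENNReal.ofReal_add (by positivity) zero_le_one]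
          simp [ENNReal.ofReal_natCast]
      _ = ENNReal.ofReal ((1 - α) * ((n:ℝ) + 1)) := by
          rw [ENNReal.ofReal_mul (by linarith)]
      _ ≤ ENNReal.ofReal (k : ℝ) := ENNReal.ofReal_le_ofReal (by exact_mod_cast hge)
      _ = (k : ENNReal) := ENNReal.ofReal_natCast k
      _ ≤ ((n:ENNReal) + 1) * μ {v : Fin (n+1) → ℝ |
            (univ.filter fun j => v j < v (Fin.last n)).card < k} := hkey
      _ = μ {v : Fin (n+1) → ℝ |
            (univ.filter fun j => v j < v (Fin.last n)).card < k} * ((n:ENNReal) + 1) :=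
          mul_comm _ _
  · have hset : {v : Fin (n + 1) → ℝ |
          ((v (Fin.last n) : ℝ) : EReal) ≤
            kthSmallestE hn (fun i : Fin n => v i.castSucc) k} = Set.univ := by
      ext v
      simp [kthSmallestE, dif_neg hkn, le_top]
    rw [hset, measure_univ]
    exact ENNReal.ofReal_le_one.mpr (by linarith)
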